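/- Let Ω₁ and Ω₂ be first and second Brocard points of triangle ABC and let L₂, L₃ be the orthogonal projections of O onto the symmedian lines BL and CL respectively. Then the following three conditions are equivalent: (i) b = c; (ii) Ω₁ = L₂; (iii) Ω₂ = L₃. -/

import Mathlib

open EuclideanGeometry
open scoped EuclideanGeometry

noncomputable section

open scoped RealInnerProductSpace

local notation "E2" => EuclideanSpace ℝ (Fin 2)

lemma aux_angle_iff {α β : ℝ} (hα : α ∈ Set.Ioo 0 Real.pi) (hβ : β ∈ Set.Ioo 0 Real.pi) :
    α = β ↔ Real.sin α * Real.cos β - Real.cos α * Real.sin β = 0 := by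
  constructor
  · rintro rfl; ring
  · intro h
    have h1 : Real.sin (α - β) = 0 := by rw [Real.sin_sub]; linarith
    have h2 : α - β = 0 := by
      rwa [Real.sin_eq_zero_iff_of_lt_of_lt (by linarith [hα.1, hα.2, hβ.1, hβ.2])
        (by linarith [hα.1, hα.2, hβ.1, hβ.2])] at h1
    linarith

set_option maxHeartbeats 2000000 in
lemma brocard_key (A B C O L Ω Lp : E2) (R a b c : ℝ)
    (hABC : AffineIndependent ℝ ![A, B, C])
    (hOA : dist O A = R) (hOB : dist O B = R) (hOC : dist O C = R)
    (ha : a = dist B C) (hb : b = dist C A) (hc : c = dist A B)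
    (hL : L = (a ^ 2 + b ^ 2 + c ^ 2)⁻¹ • (a ^ 2 • A + b ^ 2 • B + c ^ 2 • C))
    (hΩ : Ω ∈ interior (convexHull ℝ ({A, B, C} : Set E2)))
    (h1 : ∠ Ω A B = ∠ Ω B C) (h2 : ∠ Ω B C = ∠ Ω C A)
    (hLp : Lp = EuclideanGeometry.orthogonalProjection (affineSpan ℝ {B, L}) O) :
    b = c ↔ Ω = Lp := by
  -- distinct vertices
  have hinj := hABC.injective
  have hAB : A ≠ B := by
    intro h
    exact (by decide : ¬((0 : Fin 3) = 1)) (hinj (show ![A,B,C] 0 = ![A,B,C] 1 by simpa using h))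
  have hAC : A ≠ C := by
    intro h
    exact (by decide : ¬((0 : Fin 3) = 2)) (hinj (show ![A,B,C] 0 = ![A,B,C] 2 by simpa using h))
  have hBC : B ≠ C := by
    intro h
    exact (by decide : ¬((1 : Fin 3) = 2)) (hinj (show ![A,B,C] 1 = ![A,B,C] 2 by simpa using h))
  have hapos : 0 < a := by rw [ha]; exact dist_pos.mpr hBC
  have hbpos : 0 < b := by rw [hb]; exact dist_pos.mpr (Ne.symm hAC)
  have hcpos : 0 < c := by rw [hc]; exact dist_pos.mpr hAB
  -- edge vectors
  set e₁ : E2 := B - A with he₁def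
  set e₂ : E2 := C - A with he₂def
  have hne1 : ‖e₁‖ = c := by rw [hc, dist_eq_norm, he₁def, norm_sub_rev]
  have hne2 : ‖e₂‖ = b := by rw [hb, dist_eq_norm, he₂def]
  have he1 : ⟪e₁, e₁⟫ = c ^ 2 := by
    rw [real_inner_self_eq_norm_sq, hne1]
  have he2 : ⟪e₂, e₂⟫ = b ^ 2 := by
    rw [real_inner_self_eq_norm_sq, hne2]
  set K : ℝ := ⟪e₁, e₂⟫ with hKdef
  have hK : K = (b ^ 2 + c ^ 2 - a ^ 2) / 2 := by
    have h12 : ‖e₁ - e₂‖ = a := by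
      rw [ha, dist_eq_norm]; congr 1; rw [he₁def, he₂def]; abel
    have := norm_sub_sq_real e₁ e₂
    rw [h12, hne1, hne2] at this
    rw [hKdef]; nlinarith [this]
  -- linear independence of the edge vectors
  have hli : LinearIndependent ℝ ![e₁, e₂] := by
    have h := (affineIndependent_iff_linearIndependent_vsub ℝ ![A, B, C] 0).mp hABC
    have hf : Function.Injective
        (fun i : Fin 2 => (⟨i.succ, Fin.succ_ne_zero i⟩ : {x : Fin 3 // x ≠ 0})) := by
      intro i j hij
      simpa [Fin.succ_inj] using congrArg (fun x => x.1) hij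
    have h2 := h.comp _ hf
    have heq : ((fun i : {x : Fin 3 // x ≠ 0} => ![A, B, C] (i : Fin 3) -ᵥ ![A, B, C] 0) ∘
        (fun i : Fin 2 => (⟨i.succ, Fin.succ_ne_zero i⟩ : {x : Fin 3 // x ≠ 0})))
        = ![e₁, e₂] := by
      funext i
      fin_cases i <;> simp [he₁def, he₂def, vsub_eq_sub]
    rwa [heq] at h2
  have hpair := LinearIndependent.pair_iff.mp hli
  have hK21 : ⟪e₂, e₁⟫ = K := by rw [real_inner_comm]
  -- Gram determinant is positive
  have hG : 0 < b ^ 2 * c ^ 2 - K ^ 2 := by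
    have hw : b ^ 2 • e₁ - K • e₂ ≠ 0 := by
      intro hw0
      have := hpair (b ^ 2) (-K) (by rw [neg_smul, ← sub_eq_add_neg]; exact hw0)
      nlinarith [this.1]
    have hip : (0:ℝ) < ⟪b ^ 2 • e₁ - K • e₂, b ^ 2 • e₁ - K • e₂⟫ := by
      rw [real_inner_self_eq_norm_sq]
      have := norm_pos_iff.mpr hw
      positivity
    have hexp : ⟪b ^ 2 • e₁ - K • e₂, b ^ 2 • e₁ - K • e₂⟫
        = b ^ 2 * (b ^ 2 * c ^ 2 - K ^ 2) := by
      simp only [inner_sub_left, inner_sub_right, real_inner_smul_left, real_inner_smul_right,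
        he1, he2, ← hKdef, hK21]
      ring
    rw [hexp] at hip
    nlinarith [hip]
  -- the affine basis and barycentric coordinates of Ω
  have htop : affineSpan ℝ (Set.range ![A, B, C]) = ⊤ := by
    rw [hABC.affineSpan_eq_top_iff_card_eq_finrank_add_one]
    simp
  let bb : AffineBasis (Fin 3) ℝ E2 := ⟨![A, B, C], hABC, htop⟩
  have hrange : Set.range (bb : Fin 3 → E2) = ({A, B, C} : Set E2) := by
    show Set.range ![A, B, C] = _
    ext w
    constructor
    · rintro ⟨i, rfl⟩; fin_cases i <;> simp
    · rintro (rfl | rfl | rfl)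
      exacts [⟨0, rfl⟩, ⟨1, rfl⟩, ⟨2, rfl⟩]
  set x : ℝ := bb.coord 0 Ω with hxdef
  set y : ℝ := bb.coord 1 Ω with hydef
  set z : ℝ := bb.coord 2 Ω with hzdef
  have hposall : ∀ i, 0 < bb.coord i Ω := by
    rw [← hrange] at hΩ
    rw [bb.interior_convexHull] at hΩ
    exact hΩ
  have hxpos : 0 < x := hposall 0
  have hypos : 0 < y := hposall 1
  have hzpos : 0 < z := hposall 2
  have hsum : x + y + z = 1 := by
    have := bb.sum_coord_apply_eq_one Ω
    rw [Fin.sum_univ_three] at this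
    exact this
  have hcomb : Ω = x • A + y • B + z • C := by
    have h0 := bb.affineCombination_coord_eq_self Ω
    rw [Finset.univ.affineCombination_eq_linear_combination _ _
      (by rw [Fin.sum_univ_three]; exact hsum)] at h0
    rw [Fin.sum_univ_three] at h0
    exact h0.symm
  have hΩA : Ω - A = y • e₁ + z • e₂ := by
    have hx : x = 1 - y - z := by linarith
    rw [hcomb, hx, he₁def, he₂def]
    module
  -- inner product evaluation helper
  have hinner : ∀ p q r s : ℝ, ⟪p • e₁ + q • e₂, r • e₁ + s • e₂⟫
      = p * r * c ^ 2 + (p * s + q * r) * K + q * s * b ^ 2 := by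
    intro p q r s
    simp only [inner_add_left, inner_add_right, real_inner_smul_left, real_inner_smul_right,
      he1, he2, ← hKdef, hK21]
    ring
  -- nondegeneracy of combinations
  have hcombne : ∀ p q : ℝ, (p ≠ 0 ∨ q ≠ 0) → p • e₁ + q • e₂ ≠ 0 := by
    intro p q hpq h0
    rcases hpair p q h0 with ⟨rfl, rfl⟩
    simp at hpq
  -- square root of Gram determinant
  set g : ℝ := Real.sqrt (b ^ 2 * c ^ 2 - K ^ 2) with hgdef
  have hgpos : 0 < g := Real.sqrt_pos.mpr hG
  have hg2 : g ^ 2 = b ^ 2 * c ^ 2 - K ^ 2 := Real.sq_sqrt hG.le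
  -- sine and cosine formulas
  have hsin : ∀ (u v : E2) (p q r s : ℝ), u = p • e₁ + q • e₂ → v = r • e₁ + s • e₂ →
      0 ≤ p * s - q * r →
      Real.sin (InnerProductGeometry.angle u v) * (‖u‖ * ‖v‖) = (p * s - q * r) * g := by
    intro u v p q r s hu hv hdet
    rw [InnerProductGeometry.sin_angle_mul_norm_mul_norm, hu, hv]
    have hrad : ⟪p • e₁ + q • e₂, p • e₁ + q • e₂⟫ * ⟪r • e₁ + s • e₂, r • e₁ + s • e₂⟫
        - ⟪p • e₁ + q • e₂, r • e₁ + s • e₂⟫ * ⟪p • e₁ + q • e₂, r • e₁ + s • e₂⟫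
        = ((p * s - q * r) * g) ^ 2 := by
      rw [hinner, hinner, hinner]
      rw [mul_pow, hg2]
      ring
    rw [hrad, Real.sqrt_sq (by positivity)]
  have hcos : ∀ (u v : E2) (p q r s : ℝ), u = p • e₁ + q • e₂ → v = r • e₁ + s • e₂ →
      Real.cos (InnerProductGeometry.angle u v) * (‖u‖ * ‖v‖)
        = p * r * c ^ 2 + (p * s + q * r) * K + q * s * b ^ 2 := by
    intro u v p q r s hu hv
    rw [InnerProductGeometry.cos_angle_mul_norm_mul_norm, hu, hv, hinner]
  -- angle equality is equivalent to a polynomial equation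
  have hang : ∀ (u₁ v₁ u₂ v₂ : E2) (p₁ q₁ r₁ s₁ p₂ q₂ r₂ s₂ : ℝ),
      u₁ = p₁ • e₁ + q₁ • e₂ → v₁ = r₁ • e₁ + s₁ • e₂ →
      u₂ = p₂ • e₁ + q₂ • e₂ → v₂ = r₂ • e₁ + s₂ • e₂ →
      0 < p₁ * s₁ - q₁ * r₁ → 0 < p₂ * s₂ - q₂ * r₂ →
      u₁ ≠ 0 → v₁ ≠ 0 → u₂ ≠ 0 → v₂ ≠ 0 →
      (InnerProductGeometry.angle u₁ v₁ = InnerProductGeometry.angle u₂ v₂ ↔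
        (p₁ * s₁ - q₁ * r₁) * (p₂ * r₂ * c ^ 2 + (p₂ * s₂ + q₂ * r₂) * K + q₂ * s₂ * b ^ 2)
          = (p₂ * s₂ - q₂ * r₂)
            * (p₁ * r₁ * c ^ 2 + (p₁ * s₁ + q₁ * r₁) * K + q₁ * s₁ * b ^ 2)) := by
    intro u₁ v₁ u₂ v₂ p₁ q₁ r₁ s₁ p₂ q₂ r₂ s₂ hu₁ hv₁ hu₂ hv₂ hd₁ hd₂ hu₁0 hv₁0 hu₂0 hv₂0
    set α := InnerProductGeometry.angle u₁ v₁ with hαdef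
    set β := InnerProductGeometry.angle u₂ v₂ with hβdef
    set d₁ := p₁ * s₁ - q₁ * r₁
    set d₂ := p₂ * s₂ - q₂ * r₂
    set P₁ := p₁ * r₁ * c ^ 2 + (p₁ * s₁ + q₁ * r₁) * K + q₁ * s₁ * b ^ 2 with hP₁def
    set P₂ := p₂ * r₂ * c ^ 2 + (p₂ * s₂ + q₂ * r₂) * K + q₂ * s₂ * b ^ 2 with hP₂def
    set n₁ := ‖u₁‖ * ‖v₁‖ with hn₁def
    set n₂ := ‖u₂‖ * ‖v₂‖ with hn₂def
    have hn₁ : 0 < n₁ := by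
      rw [hn₁def]
      exact mul_pos (norm_pos_iff.mpr hu₁0) (norm_pos_iff.mpr hv₁0)
    have hn₂ : 0 < n₂ := by
      rw [hn₂def]
      exact mul_pos (norm_pos_iff.mpr hu₂0) (norm_pos_iff.mpr hv₂0)
    have hs₁ := hsin u₁ v₁ p₁ q₁ r₁ s₁ hu₁ hv₁ hd₁.le
    have hs₂ := hsin u₂ v₂ p₂ q₂ r₂ s₂ hu₂ hv₂ hd₂.le
    have hc₁ := hcos u₁ v₁ p₁ q₁ r₁ s₁ hu₁ hv₁
    have hc₂ := hcos u₂ v₂ p₂ q₂ r₂ s₂ hu₂ hv₂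
    have hsinα : 0 < Real.sin α := by
      have h' : Real.sin α = d₁ * g / n₁ := by
        rw [eq_div_iff hn₁.ne']; exact hs₁
      rw [h']; exact div_pos (mul_pos hd₁ hgpos) hn₁
    have hsinβ : 0 < Real.sin β := by
      have h' : Real.sin β = d₂ * g / n₂ := by
        rw [eq_div_iff hn₂.ne']; exact hs₂
      rw [h']; exact div_pos (mul_pos hd₂ hgpos) hn₂
    have hαIoo : α ∈ Set.Ioo 0 Real.pi := by
      constructor
      · rcases lt_or_eq_of_le (InnerProductGeometry.angle_nonneg u₁ v₁) with h | h
        · exact h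
        · exfalso; rw [hαdef, ← h] at hsinα; simp at hsinα
      · rcases lt_or_eq_of_le (InnerProductGeometry.angle_le_pi u₁ v₁) with h | h
        · exact h
        · exfalso; rw [hαdef] at hsinα; rw [h] at hsinα; simp at hsinα
    have hβIoo : β ∈ Set.Ioo 0 Real.pi := by
      constructor
      · rcases lt_or_eq_of_le (InnerProductGeometry.angle_nonneg u₂ v₂) with h | h
        · exact h
        · exfalso; rw [hβdef, ← h] at hsinβ; simp at hsinβ
      · rcases lt_or_eq_of_le (InnerProductGeometry.angle_le_pi u₂ v₂) with h | h
        · exact h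
        · exfalso; rw [hβdef] at hsinβ; rw [h] at hsinβ; simp at hsinβ
    rw [aux_angle_iff hαIoo hβIoo]
    have hmul : (Real.sin α * Real.cos β - Real.cos α * Real.sin β) * (n₁ * n₂)
        = g * (d₁ * P₂ - d₂ * P₁) := by
      linear_combination (Real.cos β * n₂) * hs₁ + (d₁ * g) * hc₂
        - (Real.sin β * n₂) * hc₁ - P₁ * hs₂
    constructor
    · intro h
      rw [h] at hmul
      have : g * (d₁ * P₂ - d₂ * P₁) = 0 := by
        rw [← hmul]; ring
      have h2 : d₁ * P₂ - d₂ * P₁ = 0 := by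
        rcases mul_eq_zero.mp this with h3 | h3
        · exact absurd h3 hgpos.ne'
        · exact h3
      linarith
    · intro h
      have h2 : (Real.sin α * Real.cos β - Real.cos α * Real.sin β) * (n₁ * n₂) = 0 := by
        rw [hmul]; rw [show d₁ * P₂ - d₂ * P₁ = 0 by linarith]; ring
      rcases mul_eq_zero.mp h2 with h3 | h3
      · exact h3
      · exact absurd h3 (mul_pos hn₁ hn₂).ne'
  -- decompositions of the relevant vectors
  have hx : x = 1 - y - z := by linarith
  have h1x : (0:ℝ) < 1 - y - z := by rw [← hx]; exact hxpos
  have hBA : B - A = (1:ℝ) • e₁ + (0:ℝ) • e₂ := by rw [he₁def, he₂def]; module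
  have hCB : C - B = (-1:ℝ) • e₁ + (1:ℝ) • e₂ := by rw [he₁def, he₂def]; module
  have hAC2 : A - C = (0:ℝ) • e₁ + (-1:ℝ) • e₂ := by rw [he₁def, he₂def]; module
  have hΩB : Ω - B = (y - 1) • e₁ + z • e₂ := by
    rw [hcomb, hx, he₁def, he₂def]; module
  have hΩC : Ω - C = y • e₁ + (z - 1) • e₂ := by
    rw [hcomb, hx, he₁def, he₂def]; module
  have hΩA0 : Ω - A ≠ 0 := by rw [hΩA]; exact hcombne y z (Or.inl hypos.ne')
  have hΩB0 : Ω - B ≠ 0 := by rw [hΩB]; exact hcombne (y - 1) z (Or.inr hzpos.ne')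
  have hΩC0 : Ω - C ≠ 0 := by rw [hΩC]; exact hcombne y (z - 1) (Or.inl hypos.ne')
  have hBA0 : B - A ≠ 0 := by rw [hBA]; exact hcombne 1 0 (Or.inl one_ne_zero)
  have hCB0 : C - B ≠ 0 := by rw [hCB]; exact hcombne (-1) 1 (Or.inl (neg_ne_zero.mpr one_ne_zero))
  have hAC0 : A - C ≠ 0 := by rw [hAC2]; exact hcombne 0 (-1) (Or.inr (neg_ne_zero.mpr one_ne_zero))
  -- convert the angle hypotheses
  have hconv : ∀ P Q S : E2, ∠ P Q S = InnerProductGeometry.angle (S - Q) (P - Q) := by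
    intro P Q S
    rw [EuclideanGeometry.angle, InnerProductGeometry.angle_comm, vsub_eq_sub, vsub_eq_sub]
  have h1' : InnerProductGeometry.angle (B - A) (Ω - A)
      = InnerProductGeometry.angle (C - B) (Ω - B) := by
    rw [← hconv, ← hconv]; exact h1
  have h2' : InnerProductGeometry.angle (C - B) (Ω - B)
      = InnerProductGeometry.angle (A - C) (Ω - C) := by
    rw [← hconv, ← hconv]; exact h2
  have Q1raw := (hang (B - A) (Ω - A) (C - B) (Ω - B) 1 0 y z (-1) 1 (y - 1) z
    hBA hΩA hCB hΩB (by linarith) (by linarith) hBA0 hΩA0 hCB0 hΩB0).mp h1'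
  have Q2raw := (hang (C - B) (Ω - B) (A - C) (Ω - C) (-1) 1 (y - 1) z 0 (-1) y (z - 1)
    hCB hΩB hAC2 hΩC (by linarith) (by linarith) hCB0 hΩB0 hAC0 hΩC0).mp h2'
  rw [hK] at Q1raw Q2raw
  have Q1 : z * ((1 - y) * c ^ 2 + ((y - 1) - z) * ((b ^ 2 + c ^ 2 - a ^ 2) / 2) + z * b ^ 2)
      = (1 - y - z) * (y * c ^ 2 + z * ((b ^ 2 + c ^ 2 - a ^ 2) / 2)) := by
    linear_combination Q1raw
  have Q2 : (1 - y - z) * (-(y * ((b ^ 2 + c ^ 2 - a ^ 2) / 2)) + (1 - z) * b ^ 2)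
      = y * ((1 - y) * c ^ 2 + ((y - 1) - z) * ((b ^ 2 + c ^ 2 - a ^ 2) / 2) + z * b ^ 2) := by
    linear_combination Q2raw
  -- solve for the barycentric coordinates of Ω
  have hxz : b ^ 2 * (1 - y - z) = a ^ 2 * z := by linear_combination Q2 - Q1
  have hxy : c ^ 2 * y = b ^ 2 * (1 - y - z) := by
    have h0 : a ^ 2 * (1 - y - z) * (c ^ 2 * y - b ^ 2 * (1 - y - z)) = 0 := by
      linear_combination (-(a ^ 2)) * Q1 - (a ^ 2 * (1 - y)) * hxz
    rcases mul_eq_zero.mp h0 with h3 | h3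
    · exact absurd h3 (mul_pos (pow_pos hapos 2) h1x).ne'
    · linarith
  have hYv : y * (a ^ 2 * b ^ 2 + b ^ 2 * c ^ 2 + c ^ 2 * a ^ 2) = a ^ 2 * b ^ 2 := by
    linear_combination (a ^ 2 + b ^ 2) * hxy + b ^ 2 * hxz
  have hZv : z * (a ^ 2 * b ^ 2 + b ^ 2 * c ^ 2 + c ^ 2 * a ^ 2) = b ^ 2 * c ^ 2 := by
    linear_combination (-(b ^ 2)) * hxy - (b ^ 2 + c ^ 2) * hxz
  -- inner products with the circumcenter
  have hOAn : ‖O - A‖ = R := by rw [← dist_eq_norm]; exact hOA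
  have hOBn : ‖O - B‖ = R := by rw [← dist_eq_norm]; exact hOB
  have hOCn : ‖O - C‖ = R := by rw [← dist_eq_norm]; exact hOC
  have hOe1 : ⟪O - A, e₁⟫ = c ^ 2 / 2 := by
    have hOB' : (O - A) - e₁ = O - B := by rw [he₁def]; abel
    have h5 := norm_sub_sq_real (O - A) e₁
    rw [hOB', hOBn, hOAn, hne1] at h5
    linarith
  have hOe2 : ⟪O - A, e₂⟫ = b ^ 2 / 2 := by
    have hOC' : (O - A) - e₂ = O - C := by rw [he₂def]; abel
    have h5 := norm_sub_sq_real (O - A) e₂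
    rw [hOC', hOCn, hOAn, hne2] at h5
    linarith
  -- decomposition of the symmedian direction
  have hσ : (0:ℝ) < a ^ 2 + b ^ 2 + c ^ 2 := by positivity
  have hLB : L - B = (-((a ^ 2 + c ^ 2) / (a ^ 2 + b ^ 2 + c ^ 2))) • e₁
      + (c ^ 2 / (a ^ 2 + b ^ 2 + c ^ 2)) • e₂ := by
    rw [hL, he₁def, he₂def]
    match_scalars
    · field_simp; ring
    · field_simp; ring
    · field_simp
  have hLB0 : L - B ≠ 0 := by
    rw [hLB]
    exact hcombne _ _ (Or.inr (div_pos (pow_pos hcpos 2) hσ).ne')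
  have hDpos : (0:ℝ) < ⟪L - B, L - B⟫ := by
    rw [real_inner_self_eq_norm_sq]
    have := norm_pos_iff.mpr hLB0
    positivity
  have hDval : ⟪L - B, L - B⟫
      = a ^ 2 * c ^ 2 * (2 * a ^ 2 + 2 * c ^ 2 - b ^ 2) / (a ^ 2 + b ^ 2 + c ^ 2) ^ 2 := by
    rw [hLB, hinner, hK]
    field_simp
    ring
  have hT : (0:ℝ) < 2 * a ^ 2 + 2 * c ^ 2 - b ^ 2 := by
    rw [hDval] at hDpos
    by_contra hcon
    push_neg at hcon
    have h6 : a ^ 2 * c ^ 2 * (2 * a ^ 2 + 2 * c ^ 2 - b ^ 2) ≤ 0 :=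
      mul_nonpos_of_nonneg_of_nonpos (by positivity) hcon
    have h7 : (0:ℝ) < (a ^ 2 + b ^ 2 + c ^ 2) ^ 2 := by positivity
    have h8 := div_pos_iff.mp hDpos
    rcases h8 with ⟨h9, _⟩ | ⟨_, h10⟩
    · linarith
    · linarith
  -- the explicit projection point
  set Pt : E2 := ((a ^ 2 + b ^ 2 + c ^ 2) / (2 * a ^ 2 + 2 * c ^ 2 - b ^ 2)) • (L - B) + B
    with hPtdef
  have hPtA : Pt - A
      = (1 + (a ^ 2 + b ^ 2 + c ^ 2) / (2 * a ^ 2 + 2 * c ^ 2 - b ^ 2)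
          * (-((a ^ 2 + c ^ 2) / (a ^ 2 + b ^ 2 + c ^ 2)))) • e₁
        + ((a ^ 2 + b ^ 2 + c ^ 2) / (2 * a ^ 2 + 2 * c ^ 2 - b ^ 2)
          * (c ^ 2 / (a ^ 2 + b ^ 2 + c ^ 2))) • e₂ := by
    have h5 : Pt - A = ((a ^ 2 + b ^ 2 + c ^ 2) / (2 * a ^ 2 + 2 * c ^ 2 - b ^ 2)) • (L - B)
        + (B - A) := by rw [hPtdef]; abel
    rw [h5, hLB, hBA]
    module
  -- Pt is the orthogonal projection of O on line BL
  have hproj : Lp = Pt := by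
    rw [hLp]
    haveI : Nonempty (affineSpan ℝ ({B, L} : Set E2)) :=
      ⟨⟨B, left_mem_affineSpan_pair ℝ B L⟩⟩
    have hmem : Pt ∈ affineSpan ℝ ({B, L} : Set E2) := by
      have h5 : Pt = AffineMap.lineMap B L
          ((a ^ 2 + b ^ 2 + c ^ 2) / (2 * a ^ 2 + 2 * c ^ 2 - b ^ 2)) := by
        rw [AffineMap.lineMap_apply, hPtdef, vsub_eq_sub, vadd_eq_add]
      rw [h5]
      exact AffineMap.lineMap_mem_affineSpan_pair _ B L
    have hperp : Pt ∈ AffineSubspace.mk' O ((affineSpan ℝ ({B, L} : Set E2)).directionᗮ) := by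
      rw [AffineSubspace.mem_mk']
      rw [direction_affineSpan, vectorSpan_pair]
      rw [Submodule.mem_orthogonal]
      intro u hu
      rcases Submodule.mem_span_singleton.mp hu with ⟨r, rfl⟩
      rw [real_inner_smul_left]
      have hkey : ⟪B -ᵥ L, Pt -ᵥ O⟫ = 0 := by
        rw [vsub_eq_sub, vsub_eq_sub]
        have h6 : B - L = -(L - B) := by abel
        have h7 : Pt - O = (Pt - A) - (O - A) := by abel
        rw [h6, h7, inner_neg_left, inner_sub_right, hPtA]
        rw [hLB, hinner]
        have h8 : ⟪(-((a ^ 2 + c ^ 2) / (a ^ 2 + b ^ 2 + c ^ 2))) • e₁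
            + (c ^ 2 / (a ^ 2 + b ^ 2 + c ^ 2)) • e₂, O - A⟫
            = (-((a ^ 2 + c ^ 2) / (a ^ 2 + b ^ 2 + c ^ 2))) * (c ^ 2 / 2)
              + (c ^ 2 / (a ^ 2 + b ^ 2 + c ^ 2)) * (b ^ 2 / 2) := by
          rw [inner_add_left, real_inner_smul_left, real_inner_smul_left,
            real_inner_comm (O - A) e₁, real_inner_comm (O - A) e₂, hOe1, hOe2]
        rw [h8, hK]
        have hTne := hT.ne'
        have hσne := hσ.ne'
        set T := 2 * a ^ 2 + 2 * c ^ 2 - b ^ 2 with hTdef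
        field_simp
        simp only [hTdef]
        ring
      rw [hkey, mul_zero]
    have hsing := EuclideanGeometry.inter_eq_singleton_orthogonalProjection
      (s := affineSpan ℝ ({B, L} : Set E2)) O
    have h9 : Pt ∈ ({(EuclideanGeometry.orthogonalProjection (affineSpan ℝ ({B, L} : Set E2)) O
        : E2)} : Set E2) := by
      rw [← hsing]; exact ⟨hmem, hperp⟩
    exact (Set.mem_singleton_iff.mp h9).symm
  -- final equivalence
  rw [hproj]
  constructor
  · -- b = c implies Ω = Pt
    intro hbc
    have hTc : (0:ℝ) < 2 * a ^ 2 + 2 * c ^ 2 - c ^ 2 := by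
      linarith only [pow_pos hapos 2, pow_pos hcpos 2]
    have hy2 : y * (2 * a ^ 2 + c ^ 2) = a ^ 2 := by
      rw [hbc] at hYv
      have h5 : c ^ 2 * (y * (2 * a ^ 2 + c ^ 2) - a ^ 2) = 0 := by linear_combination hYv
      rcases mul_eq_zero.mp h5 with h6 | h6
      · exact absurd h6 (pow_pos hcpos 2).ne'
      · linarith only [h6]
    have hz2 : z * (2 * a ^ 2 + c ^ 2) = c ^ 2 := by
      rw [hbc] at hZv
      have h5 : c ^ 2 * (z * (2 * a ^ 2 + c ^ 2) - c ^ 2) = 0 := by linear_combination hZv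
      rcases mul_eq_zero.mp h5 with h6 | h6
      · exact absurd h6 (pow_pos hcpos 2).ne'
      · linarith only [h6]
    have hy' : y = 1 + (a ^ 2 + b ^ 2 + c ^ 2) / (2 * a ^ 2 + 2 * c ^ 2 - b ^ 2)
        * (-((a ^ 2 + c ^ 2) / (a ^ 2 + b ^ 2 + c ^ 2))) := by
      rw [hbc]
      rw [hbc] at hσ
      have hTne := hTc.ne'
      have hσne := hσ.ne'
      set T := 2 * a ^ 2 + 2 * c ^ 2 - c ^ 2 with hTdef
      field_simp
      simp only [hTdef]
      linear_combination hy2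
    have hz' : z = (a ^ 2 + b ^ 2 + c ^ 2) / (2 * a ^ 2 + 2 * c ^ 2 - b ^ 2)
        * (c ^ 2 / (a ^ 2 + b ^ 2 + c ^ 2)) := by
      rw [hbc]
      rw [hbc] at hσ
      have hTne := hTc.ne'
      have hσne := hσ.ne'
      set T := 2 * a ^ 2 + 2 * c ^ 2 - c ^ 2 with hTdef
      field_simp
      simp only [hTdef]
      linear_combination hz2
    have h5 : Ω - A = Pt - A := by
      rw [hΩA, hPtA, hy', hz']
    have h6 := sub_left_injective h5
    exact h6
  · -- Ω = Pt implies b = c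
    intro hΩPt
    have h5 : Ω - A = Pt - A := by rw [hΩPt]
    rw [hΩA, hPtA] at h5
    have hdiff : (y - (1 + (a ^ 2 + b ^ 2 + c ^ 2) / (2 * a ^ 2 + 2 * c ^ 2 - b ^ 2)
          * (-((a ^ 2 + c ^ 2) / (a ^ 2 + b ^ 2 + c ^ 2))))) • e₁
        + (z - (a ^ 2 + b ^ 2 + c ^ 2) / (2 * a ^ 2 + 2 * c ^ 2 - b ^ 2)
          * (c ^ 2 / (a ^ 2 + b ^ 2 + c ^ 2))) • e₂ = 0 := by
      have h10 : (y - (1 + (a ^ 2 + b ^ 2 + c ^ 2) / (2 * a ^ 2 + 2 * c ^ 2 - b ^ 2)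
            * (-((a ^ 2 + c ^ 2) / (a ^ 2 + b ^ 2 + c ^ 2))))) • e₁
          + (z - (a ^ 2 + b ^ 2 + c ^ 2) / (2 * a ^ 2 + 2 * c ^ 2 - b ^ 2)
            * (c ^ 2 / (a ^ 2 + b ^ 2 + c ^ 2))) • e₂
          = (y • e₁ + z • e₂)
            - ((1 + (a ^ 2 + b ^ 2 + c ^ 2) / (2 * a ^ 2 + 2 * c ^ 2 - b ^ 2)
              * (-((a ^ 2 + c ^ 2) / (a ^ 2 + b ^ 2 + c ^ 2)))) • e₁
            + ((a ^ 2 + b ^ 2 + c ^ 2) / (2 * a ^ 2 + 2 * c ^ 2 - b ^ 2)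
              * (c ^ 2 / (a ^ 2 + b ^ 2 + c ^ 2))) • e₂) := by module
      rw [h10, h5, sub_self]
    have hy1 := (hpair _ _ hdiff).1
    have hy3 : y = 1 + (a ^ 2 + b ^ 2 + c ^ 2) / (2 * a ^ 2 + 2 * c ^ 2 - b ^ 2)
        * (-((a ^ 2 + c ^ 2) / (a ^ 2 + b ^ 2 + c ^ 2))) := by linarith only [hy1]
    have hyT : y * (2 * a ^ 2 + 2 * c ^ 2 - b ^ 2) = a ^ 2 + c ^ 2 - b ^ 2 := by
      rw [hy3]
      have hTne := hT.ne'
      have hσne := hσ.ne'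
      set T := 2 * a ^ 2 + 2 * c ^ 2 - b ^ 2 with hTdef
      field_simp
      simp only [hTdef]
      ring
    have hfac : (b ^ 2 - c ^ 2) * (a ^ 4 + a ^ 2 * c ^ 2 + b ^ 2 * c ^ 2) = 0 := by
      linear_combination (-(2 * a ^ 2 + 2 * c ^ 2 - b ^ 2)) * hYv
        + (a ^ 2 * b ^ 2 + b ^ 2 * c ^ 2 + c ^ 2 * a ^ 2) * hyT
    have hb2c2 : b ^ 2 = c ^ 2 := by
      rcases mul_eq_zero.mp hfac with h6 | h6
      · linarith only [h6]
      · have : (0:ℝ) < a ^ 4 + a ^ 2 * c ^ 2 + b ^ 2 * c ^ 2 := by positivity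
        exact absurd h6 this.ne'
    have h7 : (b - c) * (b + c) = 0 := by linear_combination hb2c2
    rcases mul_eq_zero.mp h7 with h8 | h8
    · linarith only [h8]
    · linarith only [h8, hbpos, hcpos]

theorem stmt18 (A B C O L Ω₁ Ω₂ L₂ L₃ : EuclideanSpace ℝ (Fin 2)) (R a b c : ℝ)
    (hABC : AffineIndependent ℝ ![A, B, C])
    (hR : 0 < R) (hOA : dist O A = R) (hOB : dist O B = R) (hOC : dist O C = R)
    (ha : a = dist B C) (hb : b = dist C A) (hc : c = dist A B)
    (hL : L = (a ^ 2 + b ^ 2 + c ^ 2)⁻¹ • (a ^ 2 • A + b ^ 2 • B + c ^ 2 • C))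
    (hΩ₁ : Ω₁ ∈ interior (convexHull ℝ ({A, B, C} : Set (EuclideanSpace ℝ (Fin 2)))))
    (hΩ₁₁ : ∠ Ω₁ A B = ∠ Ω₁ B C) (hΩ₁₂ : ∠ Ω₁ B C = ∠ Ω₁ C A)
    (hΩ₂ : Ω₂ ∈ interior (convexHull ℝ ({A, B, C} : Set (EuclideanSpace ℝ (Fin 2)))))
    (hΩ₂₁ : ∠ Ω₂ A C = ∠ Ω₂ C B) (hΩ₂₂ : ∠ Ω₂ C B = ∠ Ω₂ B A)
    (hL₂ : L₂ = EuclideanGeometry.orthogonalProjection (affineSpan ℝ {B, L}) O)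
    (hL₃ : L₃ = EuclideanGeometry.orthogonalProjection (affineSpan ℝ {C, L}) O) :
    (b = c ↔ Ω₁ = L₂) ∧ (b = c ↔ Ω₂ = L₃) := by
  constructor
  · exact brocard_key A B C O L Ω₁ L₂ R a b c hABC hOA hOB hOC ha hb hc hL hΩ₁ hΩ₁₁ hΩ₁₂ hL₂
  · have hABC' : AffineIndependent ℝ ![A, C, B] := by
      have h := hABC.comp_embedding (Equiv.swap (1 : Fin 3) 2).toEmbedding
      have heq : (![A, B, C] ∘ (Equiv.swap (1 : Fin 3) 2)) = ![A, C, B] := by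
        funext i
        fin_cases i <;> simp [Equiv.swap_apply_def] <;> rfl
      rw [show (⇑(Equiv.swap (1 : Fin 3) 2).toEmbedding) = ⇑(Equiv.swap (1 : Fin 3) 2)
        from rfl, heq] at h
      exact h
    have hset : ({A, B, C} : Set (EuclideanSpace ℝ (Fin 2))) = {A, C, B} := by
      rw [Set.pair_comm B C]
    have hL' : L = (a ^ 2 + c ^ 2 + b ^ 2)⁻¹ • (a ^ 2 • A + c ^ 2 • C + b ^ 2 • B) := by
      rw [hL]
      have h1 : a ^ 2 + c ^ 2 + b ^ 2 = a ^ 2 + b ^ 2 + c ^ 2 := by ring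
      rw [h1]
      congr 1
      abel
    have key2 := brocard_key A C B O L Ω₂ L₃ R a c b hABC' hOA hOC hOB
      (by rw [ha]; exact dist_comm B C) (by rw [hc]; exact dist_comm A B)
      (by rw [hb]; exact dist_comm C A) hL'
      (by rw [← hset]; exact hΩ₂) hΩ₂₁ hΩ₂₂ hL₃
    exact ⟨fun hbc => key2.mp hbc.symm, fun h => (key2.mpr h).symm⟩
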